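/- Let D = d₁ d₂, let F₁, …, F_D be d₂ × d₁ complex matrices with tr(F_α* F_β) = δ_{αβ}, let λ₁, …, λ_D > 0, and define φ(a) = Σ_{α=2}^{D} λ_α F_α a F_α* − λ₁ F₁ a F₁* on M_{d₁}(ℂ). Let 1 ≤ k < min(d₁, d₂) and suppose 0 < g_k(F₁) ≤ g_{k+1}(F₁) < 1. If λ₁ g_{k+1}(F₁) / (1 − g_{k+1}(F₁)) > λ_α ≥ λ₁ g_k(F₁) / (1 − g_k(F₁)) for every α ∈ {2, …, D}, then φ is k-positive but not (k+1)-positive. -/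

import Mathlib

open scoped ComplexOrder
open Matrix

/-- A linear map `φ : M_{d₁}(ℂ) → M_{d₂}(ℂ)` is `k`-positive if `id_k ⊗ φ` sends
positive semidefinite matrices to positive semidefinite matrices. -/
def kPositive (d₁ d₂ k : ℕ)
    (φ : Matrix (Fin d₁) (Fin d₁) ℂ →ₗ[ℂ] Matrix (Fin d₂) (Fin d₂) ℂ) : Prop :=
  ∀ a : Matrix (Fin k × Fin d₁) (Fin k × Fin d₁) ℂ, a.PosSemidef →
    (Matrix.of fun p q : Fin k × Fin d₂ =>
      φ (Matrix.of fun x y => a (p.1, x) (q.1, y)) p.2 q.2).PosSemidef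

/-- The sum of the `k` largest values of a function on a finite index type. -/
noncomputable def sumKLargest {n : Type*} [Fintype n] (k : ℕ) (f : n → ℝ) : ℝ :=
  sSup {x | ∃ s : Finset n, s.card = k ∧ x = ∑ i ∈ s, f i}

/-- `gk k F` is the sum of the `k` largest eigenvalues of `F * Fᴴ`. -/
noncomputable def gk {d₂ d₁ : ℕ} (k : ℕ) (F : Matrix (Fin d₂) (Fin d₁) ℂ) : ℝ :=
  sumKLargest k (Matrix.isHermitian_mul_conjTranspose_self F).eigenvalues

section Aux



lemma sumKLargest_spec {n : Type*} [Fintype n] [DecidableEq n] (k : ℕ)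
    (hk : k ≤ Fintype.card n) (f : n → ℝ) :
    ∃ T : Finset n, T.card = k ∧ (∑ i ∈ T, f i) = sumKLargest k f ∧
      ∀ s : Finset n, s.card = k → ∑ i ∈ s, f i ≤ sumKLargest k f := by
  classical
  set S : Set ℝ := {x | ∃ s : Finset n, s.card = k ∧ x = ∑ i ∈ s, f i} with hS
  have hset : S = ↑((Finset.univ.powersetCard k).image fun s => ∑ i ∈ s, f i) := by
    ext x
    simp only [hS, Set.mem_setOf_eq, Finset.coe_image, Set.mem_image, Finset.mem_coe,
      Finset.mem_powersetCard_univ]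
    constructor
    · rintro ⟨s, hs, rfl⟩; exact ⟨s, hs, rfl⟩
    · rintro ⟨s, hs, rfl⟩; exact ⟨s, hs, rfl⟩
  have hfin : S.Finite := by rw [hset]; exact (Finset.finite_toSet _)
  have hne : S.Nonempty := by
    obtain ⟨s, hs⟩ := (Finset.powersetCard_nonempty (s := (Finset.univ : Finset n))).2
      (by simpa using hk)
    exact ⟨∑ i ∈ s, f i, s, Finset.mem_powersetCard_univ.1 hs, rfl⟩
  have hmem : sumKLargest k f ∈ S := hne.csSup_mem hfin
  obtain ⟨T, hT, hTsum⟩ := hmem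
  refine ⟨T, hT, hTsum.symm, fun s hs => ?_⟩
  exact le_csSup hfin.bddAbove ⟨s, hs, rfl⟩

/-- Ky Fan type combinatorial bound. -/
lemma kyFan_sum_le {n : Type*} [Fintype n] [DecidableEq n] {k : ℕ}
    (hk1 : 1 ≤ k) (hk : k ≤ Fintype.card n) (f q : n → ℝ)
    (hf : ∀ i, 0 ≤ f i) (hq0 : ∀ i, 0 ≤ q i) (hq1 : ∀ i, q i ≤ 1)
    (hqs : ∑ i, q i ≤ k) : ∑ i, q i * f i ≤ sumKLargest k f := by
  classical
  obtain ⟨T, hTcard, hTsum, hTmax⟩ := sumKLargest_spec k hk f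
  -- T is a "top-k" set
  have htop : ∀ i ∈ T, ∀ j ∉ T, f j ≤ f i := by
    intro i hi j hj
    have hne : j ∉ T.erase i := fun h => hj (Finset.mem_of_mem_erase h)
    have hcard : (insert j (T.erase i)).card = k := by
      rw [Finset.card_insert_of_notMem hne, Finset.card_erase_of_mem hi, hTcard]
      omega
    have hle := hTmax _ hcard
    rw [Finset.sum_insert hne, ← hTsum, ← Finset.add_sum_erase T f hi] at hle
    linarith
  -- minimum of f over T
  obtain ⟨i₀, hi₀, hmin⟩ := T.exists_min_image f (Finset.card_pos.1 (by omega))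
  have hm0 : 0 ≤ f i₀ := hf i₀
  have h1 : ∑ i ∈ Finset.univ \ T, q i * f i ≤ (∑ i ∈ Finset.univ \ T, q i) * f i₀ := by
    rw [Finset.sum_mul]
    refine Finset.sum_le_sum fun j hj => ?_
    have hjT : j ∉ T := (Finset.mem_sdiff.1 hj).2
    exact mul_le_mul_of_nonneg_left (htop i₀ hi₀ j hjT) (hq0 j)
  have h2 : (∑ i ∈ Finset.univ \ T, q i) ≤ (k : ℝ) - ∑ i ∈ T, q i := by
    have := Finset.sum_sdiff (f := q) (Finset.subset_univ T)
    linarith [this, hqs]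
  have h3 : ((k : ℝ) - ∑ i ∈ T, q i) = ∑ i ∈ T, (1 - q i) := by
    rw [Finset.sum_sub_distrib, Finset.sum_const, hTcard]
    simp
  have h4 : (∑ i ∈ T, (1 - q i)) * f i₀ ≤ ∑ i ∈ T, (1 - q i) * f i := by
    rw [Finset.sum_mul]
    refine Finset.sum_le_sum fun i hi => ?_
    exact mul_le_mul_of_nonneg_left (hmin i hi) (by linarith [hq1 i])
  have h5 : ∑ i ∈ T, q i * f i + ∑ i ∈ T, (1 - q i) * f i = ∑ i ∈ T, f i := by
    rw [← Finset.sum_add_distrib]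
    exact Finset.sum_congr rfl fun i _ => by ring
  have hsplit : ∑ i, q i * f i = ∑ i ∈ Finset.univ \ T, q i * f i + ∑ i ∈ T, q i * f i :=
    (Finset.sum_sdiff (Finset.subset_univ T)).symm
  have hqT : (∑ i ∈ Finset.univ \ T, q i) * f i₀ ≤ ((k : ℝ) - ∑ i ∈ T, q i) * f i₀ :=
    mul_le_mul_of_nonneg_right h2 hm0
  rw [← hTsum]
  calc ∑ i, q i * f i ≤ ((k : ℝ) - ∑ i ∈ T, q i) * f i₀ + ∑ i ∈ T, q i * f i := by
        rw [hsplit]; linarith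
    _ ≤ ∑ i ∈ T, (1 - q i) * f i + ∑ i ∈ T, q i * f i := by rw [h3]; linarith [h4]
    _ = ∑ i ∈ T, f i := by linarith [h5]


variable {d₁ d₂ : ℕ}

noncomputable def toE (M : Matrix (Fin d₂) (Fin d₁) ℂ) : EuclideanSpace ℂ (Fin d₂ × Fin d₁) :=
  WithLp.toLp 2 fun p => M p.1 p.2

lemma inner_toE (A B : Matrix (Fin d₂) (Fin d₁) ℂ) :
    (inner ℂ (toE A) (toE B) : ℂ) = (Aᴴ * B).trace := by
  simp only [toE, PiLp.inner_apply, RCLike.inner_apply, Matrix.trace, Matrix.diag,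
    Matrix.mul_apply, conjTranspose_apply, Fintype.sum_prod_type]
  rw [Finset.sum_comm]
  simp [mul_comm]

lemma trace_conjTranspose_mul_self_eq (A : Matrix (Fin d₂) (Fin d₁) ℂ) :
    (Aᴴ * A).trace = ((∑ m, ∑ s, Complex.normSq (A m s) : ℝ) : ℂ) := by
  simp only [Matrix.trace, Matrix.diag, Matrix.mul_apply, conjTranspose_apply]
  rw [Finset.sum_comm]
  push_cast
  refine Finset.sum_congr rfl fun m _ => Finset.sum_congr rfl fun s _ => ?_
  rw [Complex.normSq_eq_conj_mul_self]; rfl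

lemma eq_zero_of_trace_conjTranspose_mul_self (A : Matrix (Fin d₂) (Fin d₁) ℂ)
    (h : (Aᴴ * A).trace = 0) : A = 0 := by
  rw [trace_conjTranspose_mul_self_eq] at h
  have h' : (∑ m, ∑ s, Complex.normSq (A m s) : ℝ) = 0 := by exact_mod_cast h
  ext m s
  have hms : Complex.normSq (A m s) = 0 := by
    have h1 : ∀ m ∈ (Finset.univ : Finset (Fin d₂)), 0 ≤ ∑ s, Complex.normSq (A m s) :=
      fun m _ => Finset.sum_nonneg fun s _ => Complex.normSq_nonneg _
    have h2 := (Finset.sum_eq_zero_iff_of_nonneg h1).1 h' m (Finset.mem_univ m)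
    have h3 : ∀ s ∈ (Finset.univ : Finset (Fin d₁)), 0 ≤ Complex.normSq (A m s) :=
      fun s _ => Complex.normSq_nonneg _
    exact (Finset.sum_eq_zero_iff_of_nonneg h3).1 h2 s (Finset.mem_univ s)
  simpa using Complex.normSq_eq_zero.1 hms

lemma cauchy_schwarz_trace (A B : Matrix (Fin d₂) (Fin d₁) ℂ) :
    Complex.normSq ((Aᴴ * B).trace) ≤ ((Aᴴ * A).trace).re * ((Bᴴ * B).trace).re := by
  have h := inner_mul_inner_self_le (𝕜 := ℂ) (toE A) (toE B)
  rw [inner_toE, inner_toE, inner_toE, inner_toE] at h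
  have hBA : (Bᴴ * A).trace = (starRingEnd ℂ) ((Aᴴ * B).trace) := by
    have : Bᴴ * A = (Aᴴ * B)ᴴ := by
      rw [Matrix.conjTranspose_mul, Matrix.conjTranspose_conjTranspose]
    rw [this, Matrix.trace_conjTranspose]
    rfl
  have h2 : Complex.normSq ((Aᴴ * B).trace) = ‖(Aᴴ * B).trace‖ * ‖(Bᴴ * A).trace‖ := by
    rw [hBA]
    simp [Complex.normSq_eq_norm_sq, sq]
  rw [h2]
  simpa using h

lemma parseval_traces {D : ℕ} (F : Fin D → Matrix (Fin d₂) (Fin d₁) ℂ)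
    (hF : ∀ α β, ((F α)ᴴ * F β).trace = if α = β then 1 else 0)
    (hcard : D = d₁ * d₂) (hD : 0 < D) (M : Matrix (Fin d₂) (Fin d₁) ℂ) :
    ∑ α, Complex.normSq (((F α)ᴴ * M).trace) = ((Mᴴ * M).trace).re := by
  classical
  haveI : Nonempty (Fin D) := ⟨⟨0, hD⟩⟩
  set v : Fin D → EuclideanSpace ℂ (Fin d₂ × Fin d₁) := fun α => toE (F α) with hv
  have hortho : Orthonormal ℂ v := by
    rw [orthonormal_iff_ite]
    intro α β
    rw [hv]
    simp only []
    rw [inner_toE, hF]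
  have hli := hortho.linearIndependent
  have hcard' : Fintype.card (Fin D) =
      Module.finrank ℂ (EuclideanSpace ℂ (Fin d₂ × Fin d₁)) := by
    simp [finrank_euclideanSpace, hcard, mul_comm]
  let b := basisOfLinearIndependentOfCardEqFinrank hli hcard'
  have hbv : ⇑b = v := coe_basisOfLinearIndependentOfCardEqFinrank hli hcard'
  have hob : Orthonormal ℂ ⇑b := by rwa [hbv]
  let onb := b.toOrthonormalBasis hob
  have honb : ⇑onb = v := by
    rw [Module.Basis.coe_toOrthonormalBasis, hbv]
  have hps := onb.sum_inner_mul_inner (toE M) (toE M)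
  have hps' : ∑ α, (Complex.normSq (((F α)ᴴ * M).trace) : ℂ) = (Mᴴ * M).trace := by
    rw [← inner_toE M M, ← hps]
    refine Finset.sum_congr rfl fun α _ => ?_
    rw [honb]
    rw [← inner_conj_symm (toE M) (v α)]
    have : (inner ℂ (v α) (toE M) : ℂ) = ((F α)ᴴ * M).trace := inner_toE _ _
    rw [this]
    rw [Complex.normSq_eq_conj_mul_self]
  have := congrArg Complex.re hps'
  simpa using this
lemma rank_bound {d₁ d₂ kk : ℕ} (hk1 : 1 ≤ kk) (hk2 : kk ≤ d₂)
    (G : Matrix (Fin d₂) (Fin d₁) ℂ)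
    (Y : Matrix (Fin kk) (Fin d₂) ℂ) (X : Matrix (Fin kk) (Fin d₁) ℂ) :
    Complex.normSq ((Gᴴ * (Yᴴ * X)).trace)
      ≤ gk kk G * (((Yᴴ * X)ᴴ * (Yᴴ * X)).trace).re := by
  classical
  set M := Yᴴ * X with hMdef
  set W := Yᴴ * Y with hWdef
  have hW : W.IsHermitian := Matrix.isHermitian_conjTranspose_mul_self Y
  set V : Matrix (Fin d₂) (Fin d₂) ℂ := ↑(hW.eigenvectorUnitary) with hVdef
  set ν : Fin d₂ → ℝ := hW.eigenvalues with hνdef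
  set E : Matrix (Fin d₂) (Fin d₂) ℂ := Matrix.diagonal (fun j => if ν j = 0 then 0 else 1)
    with hEdef
  set P := V * E * Vᴴ with hPdef
  have hV1 : Vᴴ * V = 1 := by
    rw [← Matrix.star_eq_conjTranspose]
    exact Matrix.mem_unitaryGroup_iff'.mp hW.eigenvectorUnitary.2
  have hV2 : V * Vᴴ = 1 := by
    rw [← Matrix.star_eq_conjTranspose]
    exact Matrix.mem_unitaryGroup_iff.mp hW.eigenvectorUnitary.2
  have hEH : Eᴴ = E := by
    rw [hEdef, Matrix.diagonal_conjTranspose]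
    have : (star fun j => if ν j = 0 then (0:ℂ) else 1)
        = (fun j => if ν j = 0 then (0:ℂ) else 1) := by
      funext j; by_cases h : ν j = 0 <;> simp [h]
    rw [this]
  have hEE : E * E = E := by
    rw [hEdef, Matrix.diagonal_mul_diagonal]
    have : (fun j => (if ν j = 0 then (0:ℂ) else 1) * (if ν j = 0 then (0:ℂ) else 1))
        = (fun j => if ν j = 0 then (0:ℂ) else 1) := by
      funext j; by_cases h : ν j = 0 <;> simp [h]
    rw [this]
  have hPH : Pᴴ = P := by
    rw [hPdef]
    rw [Matrix.conjTranspose_mul, Matrix.conjTranspose_mul, hEH,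
      Matrix.conjTranspose_conjTranspose, Matrix.mul_assoc]
  have hPP : P * P = P := by
    rw [hPdef]
    calc V * E * Vᴴ * (V * E * Vᴴ) = V * E * (Vᴴ * V) * E * Vᴴ := by
          simp only [Matrix.mul_assoc]
      _ = V * E * Vᴴ := by rw [hV1]; simp only [Matrix.mul_one, Matrix.mul_assoc, hEE]
      _ = V * E * Vᴴ := by rw [Matrix.mul_assoc]
  set Dν : Matrix (Fin d₂) (Fin d₂) ℂ := Matrix.diagonal (RCLike.ofReal ∘ ν) with hDνdef
  have hspec : W = V * Dν * Vᴴ := by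
    have h := hW.spectral_theorem
    rw [← Matrix.star_eq_conjTranspose]
    exact h
  have hED : E * Dν = Dν := by
    rw [hEdef, hDνdef, Matrix.diagonal_mul_diagonal]
    have : (fun j => (if ν j = 0 then (0:ℂ) else 1) * (RCLike.ofReal ∘ ν) j)
        = (RCLike.ofReal ∘ ν) := by
      funext j
      by_cases h : ν j = 0 <;> simp [h]
    rw [this]
  have hPW : P * W = W := by
    rw [hspec, hPdef]
    calc V * E * Vᴴ * (V * Dν * Vᴴ) = V * (E * ((Vᴴ * V) * Dν)) * Vᴴ := by
          simp only [Matrix.mul_assoc]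
      _ = V * (E * Dν) * Vᴴ := by rw [hV1, Matrix.one_mul]
      _ = V * Dν * Vᴴ := by rw [hED]
  have hPY : P * Yᴴ = Yᴴ := by
    have hAH : (Yᴴ - P * Yᴴ)ᴴ = Y - Y * P := by
      rw [Matrix.conjTranspose_sub, Matrix.conjTranspose_mul, hPH,
        Matrix.conjTranspose_conjTranspose]
    have hexp : (Yᴴ - P * Yᴴ)ᴴ * (Yᴴ - P * Yᴴ)
        = Y * Yᴴ - Y * (P * Yᴴ) - (Y * P * Yᴴ - Y * P * (P * Yᴴ)) := by
      rw [hAH, Matrix.sub_mul, Matrix.mul_sub, Matrix.mul_sub]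
    have htr0 : ((Yᴴ - P * Yᴴ)ᴴ * (Yᴴ - P * Yᴴ)).trace = 0 := by
      rw [hexp]
      have e1 : (Y * Yᴴ).trace = W.trace := Matrix.trace_mul_comm Y Yᴴ
      have e2 : (Y * (P * Yᴴ)).trace = W.trace := by
        rw [Matrix.trace_mul_comm Y (P * Yᴴ), Matrix.mul_assoc, ← hWdef, hPW]
      have e3 : (Y * P * Yᴴ).trace = W.trace := by
        rw [Matrix.mul_assoc, Matrix.trace_mul_comm Y (P * Yᴴ), Matrix.mul_assoc, ← hWdef, hPW]
      have e4 : (Y * P * (P * Yᴴ)).trace = W.trace := by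
        have : Y * P * (P * Yᴴ) = Y * (P * Yᴴ) := by
          rw [Matrix.mul_assoc, ← Matrix.mul_assoc P P Yᴴ, hPP]
        rw [this]
        exact e2
      rw [Matrix.trace_sub, Matrix.trace_sub, Matrix.trace_sub, e1, e2, e3, e4]
      ring
    have hzero := eq_zero_of_trace_conjTranspose_mul_self _ htr0
    have := sub_eq_zero.mp hzero
    exact this.symm
  have hPM : P * M = M := by
    rw [hMdef, ← Matrix.mul_assoc, hPY]
  -- spectral data for G * Gᴴ
  have hHh : (G * Gᴴ).IsHermitian := Matrix.isHermitian_mul_conjTranspose_self G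
  set U : Matrix (Fin d₂) (Fin d₂) ℂ := ↑(hHh.eigenvectorUnitary) with hUdef
  set μ : Fin d₂ → ℝ := hHh.eigenvalues with hμdef
  set Dμ : Matrix (Fin d₂) (Fin d₂) ℂ := Matrix.diagonal (RCLike.ofReal ∘ μ) with hDμdef
  have hU1 : Uᴴ * U = 1 := by
    rw [← Matrix.star_eq_conjTranspose]
    exact Matrix.mem_unitaryGroup_iff'.mp hHh.eigenvectorUnitary.2
  have hU2 : U * Uᴴ = 1 := by
    rw [← Matrix.star_eq_conjTranspose]
    exact Matrix.mem_unitaryGroup_iff.mp hHh.eigenvectorUnitary.2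
  have hspecH : G * Gᴴ = U * Dμ * Uᴴ := by
    have h := hHh.spectral_theorem
    rw [← Matrix.star_eq_conjTranspose]
    exact h
  set C := Vᴴ * U with hCdef
  have hC1 : Cᴴ * C = 1 := by
    rw [hCdef, Matrix.conjTranspose_mul, Matrix.conjTranspose_conjTranspose]
    calc Uᴴ * V * (Vᴴ * U) = Uᴴ * (V * Vᴴ) * U := by simp only [Matrix.mul_assoc]
      _ = 1 := by rw [hV2, Matrix.mul_one, hU1]
  have hC2 : C * Cᴴ = 1 := by
    rw [hCdef, Matrix.conjTranspose_mul, Matrix.conjTranspose_conjTranspose]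
    calc Vᴴ * U * (Uᴴ * V) = Vᴴ * (U * Uᴴ) * V := by simp only [Matrix.mul_assoc]
      _ = 1 := by rw [hU2, Matrix.mul_one, hV1]
  set q : Fin d₂ → ℝ := fun r => ∑ j, if ν j = 0 then 0 else Complex.normSq (C j r) with hqdef
  have hq0 : ∀ r, 0 ≤ q r := by
    intro r
    refine Finset.sum_nonneg fun j _ => ?_
    by_cases h : ν j = 0 <;> simp [h, Complex.normSq_nonneg]
  have hCC : ∀ r, ((Cᴴ * C) r r) = ((∑ j, Complex.normSq (C j r) : ℝ) : ℂ) := by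
    intro r
    rw [Matrix.mul_apply]
    push_cast
    refine Finset.sum_congr rfl fun j _ => ?_
    rw [Matrix.conjTranspose_apply, Complex.normSq_eq_conj_mul_self]
    rfl
  have hq1 : ∀ r, q r ≤ 1 := by
    intro r
    have h1 : q r ≤ ∑ j, Complex.normSq (C j r) := by
      refine Finset.sum_le_sum fun j _ => ?_
      by_cases h : ν j = 0 <;> simp [h, Complex.normSq_nonneg]
    have h2 : ((∑ j, Complex.normSq (C j r) : ℝ) : ℂ) = 1 := by
      rw [← hCC, hC1, Matrix.one_apply_eq]
    have h3 : (∑ j, Complex.normSq (C j r) : ℝ) = 1 := by exact_mod_cast h2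
    linarith
  have hCCH : ∀ j, ((C * Cᴴ) j j) = ((∑ r, Complex.normSq (C j r) : ℝ) : ℂ) := by
    intro j
    rw [Matrix.mul_apply]
    push_cast
    refine Finset.sum_congr rfl fun r _ => ?_
    rw [Matrix.conjTranspose_apply]
    rw [mul_comm, Complex.normSq_eq_conj_mul_self]
    rfl
  have hqsum : ∑ r, q r ≤ (kk : ℝ) := by
    have h1 : ∑ r, q r = ∑ j, (if ν j = 0 then (0:ℝ) else 1) := by
      rw [hqdef]
      rw [Finset.sum_comm]
      refine Finset.sum_congr rfl fun j _ => ?_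
      by_cases h : ν j = 0
      · simp [h]
      · simp only [h, if_false]
        have h2 : ((∑ r, Complex.normSq (C j r) : ℝ) : ℂ) = 1 := by
          rw [← hCCH, hC2, Matrix.one_apply_eq]
        exact_mod_cast h2
    have h2 : ∑ j, (if ν j = 0 then (0:ℝ) else 1)
        = ((Finset.univ.filter fun j => ν j ≠ 0).card : ℝ) := by
      rw [Finset.card_filter]
      push_cast
      refine Finset.sum_congr rfl fun j _ => ?_
      by_cases h : ν j = 0 <;> simp [h]
    have h3 : (Finset.univ.filter fun j => ν j ≠ 0).card = W.rank := by
      rw [hW.rank_eq_card_non_zero_eigs]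
      rw [Fintype.card_subtype]
    have h4 : W.rank ≤ kk := by
      rw [hWdef, Matrix.rank_conjTranspose_mul_self]
      exact Matrix.rank_le_height Y
    rw [h1, h2, h3]
    exact_mod_cast h4
  -- the trace identity
  have hPG : (P * G)ᴴ * (P * G) = Gᴴ * (P * G) := by
    rw [Matrix.conjTranspose_mul, hPH, Matrix.mul_assoc, ← Matrix.mul_assoc P P G, hPP]
  have hCEC : ∀ r, (Cᴴ * E * C) r r = ((q r : ℝ) : ℂ) := by
    intro r
    rw [Matrix.mul_apply]
    have : ∀ j, (Cᴴ * E) r j = star (C j r) * (if ν j = 0 then 0 else 1) := by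
      intro j
      rw [Matrix.mul_apply]
      rw [Finset.sum_eq_single j]
      · rw [Matrix.conjTranspose_apply, hEdef, Matrix.diagonal_apply_eq]
      · intro l _ hl
        rw [hEdef, Matrix.diagonal_apply_ne _ hl, mul_zero]
      · intro h; exact absurd (Finset.mem_univ j) h
    rw [hqdef]
    push_cast
    refine Finset.sum_congr rfl fun j _ => ?_
    rw [this j]
    by_cases h : ν j = 0
    · simp [h]
    · simp only [h, if_false, mul_one]
      rw [Complex.normSq_eq_conj_mul_self]
      rfl
  have htrace : ((P * G)ᴴ * (P * G)).trace = ((∑ r, q r * μ r : ℝ) : ℂ) := by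
    rw [hPG]
    have e1 : (Gᴴ * (P * G)).trace = (P * (G * Gᴴ)).trace := by
      rw [Matrix.trace_mul_comm, Matrix.mul_assoc]
    have e2 : P * (G * Gᴴ) = P * U * Dμ * Uᴴ := by
      rw [hspecH]; simp only [Matrix.mul_assoc]
    have e3 : (P * U * Dμ * Uᴴ).trace = (Uᴴ * (P * U) * Dμ).trace := by
      rw [Matrix.trace_mul_comm (P * U * Dμ) Uᴴ]
      simp only [Matrix.mul_assoc]
    have e4 : Uᴴ * (P * U) = Cᴴ * E * C := by
      rw [hPdef, hCdef, Matrix.conjTranspose_mul, Matrix.conjTranspose_conjTranspose]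
      simp only [Matrix.mul_assoc]
    have e5 : (Cᴴ * E * C * Dμ).trace = ∑ r, (Cᴴ * E * C) r r * ((μ r : ℝ) : ℂ) := by
      rw [Matrix.trace]
      refine Finset.sum_congr rfl fun r _ => ?_
      rw [Matrix.diag]
      rw [hDμdef, Matrix.mul_diagonal]
      rfl
    rw [e1, e2, e3, e4, e5]
    push_cast
    refine Finset.sum_congr rfl fun r _ => ?_
    rw [hCEC r]
  have hfan : ∑ r, q r * μ r ≤ gk kk G := by
    have hμ0 : ∀ i, 0 ≤ μ i := fun i =>
      (Matrix.posSemidef_self_mul_conjTranspose G).eigenvalues_nonneg i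
    have := kyFan_sum_le (n := Fin d₂) hk1 (by simpa using hk2) μ q hμ0 hq0 hq1
      (by simpa using hqsum)
    exact this
  -- Cauchy-Schwarz
  have hceq : ((P * G)ᴴ * M).trace = (Gᴴ * M).trace := by
    rw [Matrix.conjTranspose_mul, hPH, Matrix.mul_assoc, hPM]
  have hcs := cauchy_schwarz_trace (P * G) M
  rw [hceq, htrace] at hcs
  have hM2 : 0 ≤ ((Mᴴ * M).trace).re := by
    rw [trace_conjTranspose_mul_self_eq]
    rw [Complex.ofReal_re]
    refine Finset.sum_nonneg fun m _ => Finset.sum_nonneg fun s _ => Complex.normSq_nonneg _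
  have hfin : ((∑ r, q r * μ r : ℝ) : ℂ).re * ((Mᴴ * M).trace).re
      ≤ gk kk G * ((Mᴴ * M).trace).re := by
    rw [Complex.ofReal_re]
    exact mul_le_mul_of_nonneg_right hfan hM2
  exact le_trans hcs hfin


def Gmat {d₁ d₂ : ℕ} (K : ℕ) (Fm : Matrix (Fin d₂) (Fin d₁) ℂ) :
    Matrix (Fin K × Fin d₂) (Fin K × Fin d₁) ℂ :=
  Matrix.of fun p x => if p.1 = x.1 then Fm p.2 x.2 else 0

lemma Gmat_conj_apply {d₁ d₂ K : ℕ} (Fm : Matrix (Fin d₂) (Fin d₁) ℂ)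
    (a : Matrix (Fin K × Fin d₁) (Fin K × Fin d₁) ℂ) (p q : Fin K × Fin d₂) :
    (Gmat K Fm * a * (Gmat K Fm)ᴴ) p q
      = (Fm * (Matrix.of fun s t => a (p.1, s) (q.1, t)) * Fmᴴ) p.2 q.2 := by
  have inner : ∀ (j : Fin K) (t : Fin d₁),
      (∑ i : Fin K, ∑ s : Fin d₁, if p.1 = i then Fm p.2 s * a (i, s) (j, t) else 0)
        = ∑ s : Fin d₁, Fm p.2 s * a (p.1, s) (j, t) := by
    intro j t
    rw [Finset.sum_comm]
    refine Finset.sum_congr rfl fun s _ => ?_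
    simp
  simp only [Gmat, Matrix.mul_apply, Matrix.conjTranspose_apply, Matrix.of_apply,
    Fintype.sum_prod_type, ite_mul, zero_mul, mul_ite, mul_zero]
  rw [Finset.sum_comm]
  refine Finset.sum_congr rfl fun t _ => ?_
  rw [Finset.sum_eq_single q.1]
  · rw [inner q.1 t, if_pos rfl]
  · intro j _ hj
    rw [if_neg (fun h => hj h.symm), star_zero, mul_zero]
  · intro h; exact absurd (Finset.mem_univ q.1) h

lemma isHermitian_Gmat_conj {d₁ d₂ K : ℕ} (Fm : Matrix (Fin d₂) (Fin d₁) ℂ)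
    {a : Matrix (Fin K × Fin d₁) (Fin K × Fin d₁) ℂ} (ha : a.IsHermitian) :
    (Gmat K Fm * a * (Gmat K Fm)ᴴ).IsHermitian := by
  have : (Gmat K Fm * a * (Gmat K Fm)ᴴ)ᴴ = Gmat K Fm * aᴴ * (Gmat K Fm)ᴴ := by
    rw [Matrix.conjTranspose_mul, Matrix.conjTranspose_mul,
      Matrix.conjTranspose_conjTranspose, Matrix.mul_assoc]
  unfold Matrix.IsHermitian
  rw [this, ha.eq]

lemma form_eq_sum_normSq {d₁ d₂ K : ℕ} {ρ : Type*} [Fintype ρ] (Fm : Matrix (Fin d₂) (Fin d₁) ℂ)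
    (B : Matrix ρ (Fin K × Fin d₁) ℂ) (y : Fin K × Fin d₂ → ℂ) :
    dotProduct (star y) ((Gmat K Fm * (Bᴴ * B) * (Gmat K Fm)ᴴ) *ᵥ y)
      = ∑ r, (Complex.normSq ((Fmᴴ *
          (Matrix.of fun n t => ∑ i, y (i, n) * B r (i, t))).trace) : ℂ) := by
  set G := Gmat (d₁ := d₁) (d₂ := d₂) K Fm with hG
  have h1 : G * (Bᴴ * B) * Gᴴ = (G * Bᴴ) * (B * Gᴴ) := by
    simp only [Matrix.mul_assoc]
  set v := B *ᵥ (Gᴴ *ᵥ y) with hv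
  have h2 : star y ⬝ᵥ ((G * (Bᴴ * B) * Gᴴ) *ᵥ y) = star v ⬝ᵥ v := by
    rw [h1, ← Matrix.mulVec_mulVec, dotProduct_mulVec]
    have h3 : star y ᵥ* (G * Bᴴ) = star v := by
      rw [hv, Matrix.mulVec_mulVec, Matrix.star_mulVec, Matrix.conjTranspose_mul,
        Matrix.conjTranspose_conjTranspose]
    rw [h3, hv, Matrix.mulVec_mulVec]
  have h4 : star v ⬝ᵥ v = ∑ r : ρ, (Complex.normSq (v r) : ℂ) := by
    simp only [dotProduct, Pi.star_apply]
    refine Finset.sum_congr rfl fun r _ => ?_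
    rw [Complex.normSq_eq_conj_mul_self]
    rfl
  have h5 : ∀ r, v r = (Fmᴴ *
      (Matrix.of fun n t => ∑ i, y (i, n) * B r (i, t))).trace := by
    intro r
    have hw : ∀ x : Fin K × Fin d₁, (Gᴴ *ᵥ y) x = ∑ n, star (Fm n x.2) * y (x.1, n) := by
      intro x
      simp only [Matrix.mulVec, dotProduct, hG, Gmat, Matrix.conjTranspose_apply,
        Matrix.of_apply, Fintype.sum_prod_type]
      rw [Finset.sum_eq_single x.1]
      · refine Finset.sum_congr rfl fun n _ => ?_
        rw [if_pos rfl]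
      · intro j _ hj
        have : ∀ n, star (if j = x.1 then Fm n x.2 else 0) * y (j, n) = 0 := by
          intro n
          rw [if_neg hj, star_zero, zero_mul]
        simp only [this, Finset.sum_const_zero]
      · intro h; exact absurd (Finset.mem_univ x.1) h
    have hstep : v r = ∑ i : Fin K, ∑ t : Fin d₁, ∑ n : Fin d₂,
        y (i, n) * star (Fm n t) * B r (i, t) := by
      have hv1 : v r = ∑ x : Fin K × Fin d₁, B r x * ∑ n, star (Fm n x.2) * y (x.1, n) := by
        simp only [hv, Matrix.mulVec, dotProduct]
        refine Finset.sum_congr rfl fun x _ => ?_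
        have : (∑ x1 : Fin K × Fin d₂, Gᴴ x x1 * y x1) = (Gᴴ *ᵥ y) x := rfl
        rw [this, hw x]
      rw [hv1, Fintype.sum_prod_type]
      refine Finset.sum_congr rfl fun i _ => Finset.sum_congr rfl fun t _ => ?_
      rw [Finset.mul_sum]
      exact Finset.sum_congr rfl fun n _ => by ring
    have htr : (Fmᴴ * (Matrix.of fun n t => ∑ i, y (i, n) * B r (i, t))).trace
        = ∑ t : Fin d₁, ∑ n : Fin d₂, ∑ i : Fin K,
            y (i, n) * star (Fm n t) * B r (i, t) := by
      simp only [Matrix.trace, Matrix.diag, Matrix.mul_apply, Matrix.conjTranspose_apply,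
        Matrix.of_apply]
      refine Finset.sum_congr rfl fun t _ => Finset.sum_congr rfl fun n _ => ?_
      rw [Finset.mul_sum]
      exact Finset.sum_congr rfl fun i _ => by ring
    rw [hstep, htr, Finset.sum_comm]
    refine Finset.sum_congr rfl fun t _ => ?_
    rw [Finset.sum_comm]
  rw [h2, h4]
  exact Finset.sum_congr rfl fun r _ => by rw [h5 r]

lemma core_ineq {D : ℕ} (lam : Fin D → ℝ) (α₁ : Fin D) (g lam1 : ℝ)
    (hg0 : 0 < g) (hg1 : g < 1) (hlam1 : 0 < lam1)
    (hlow : ∀ α ∈ Finset.univ.erase α₁, lam1 * g / (1 - g) ≤ lam α)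
    (w : Fin D → ℝ) (hw : ∀ α, 0 ≤ w α) (ht : w α₁ ≤ g * (∑ α, w α)) :
    lam1 * w α₁ ≤ ∑ α ∈ Finset.univ.erase α₁, lam α * w α := by
  have h1g : 0 < 1 - g := by linarith
  set c := lam1 * g / (1 - g) with hc
  have hcpos : 0 ≤ c := div_nonneg (mul_nonneg hlam1.le hg0.le) h1g.le
  have h2 : ∑ α ∈ Finset.univ.erase α₁, w α = (∑ α, w α) - w α₁ := by
    have := Finset.add_sum_erase Finset.univ w (Finset.mem_univ α₁)
    linarith
  have h3 : c * ((∑ α, w α) - w α₁) ≤ ∑ α ∈ Finset.univ.erase α₁, lam α * w α := by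
    rw [← h2, Finset.mul_sum]
    exact Finset.sum_le_sum fun α hα => mul_le_mul_of_nonneg_right (hlow α hα) (hw α)
  have h5 : w α₁ / g ≤ ∑ α, w α := by
    rw [div_le_iff₀ hg0]
    calc w α₁ ≤ g * (∑ α, w α) := ht
      _ = (∑ α, w α) * g := by ring
  have h4 : lam1 * w α₁ ≤ c * ((∑ α, w α) - w α₁) := by
    have heq : lam1 * w α₁ = c * (w α₁ / g - w α₁) := by
      rw [hc]
      field_simp
    rw [heq]
    exact mul_le_mul_of_nonneg_left (by linarith) hcpos
  linarith

lemma posSemidef_iff_eq_transpose_mul_self_aux {n : Type*} [Fintype n] [DecidableEq n]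
    {A : Matrix n n ℂ} (hA : A.PosSemidef) : ∃ B : Matrix n n ℂ, A = Bᴴ * B := by
  open scoped MatrixOrder in
  exact CStarAlgebra.nonneg_iff_eq_star_mul_self.mp hA.nonneg

lemma dot_sum_sub {n' : Type*} [Fintype n'] {ι : Type*} [DecidableEq ι]
    (s : Finset ι) (c : ι → ℝ) (M : ι → Matrix n' n' ℂ)
    (c₀ : ℝ) (M₀ : Matrix n' n' ℂ) (y : n' → ℂ) :
    dotProduct (star y) (((∑ α ∈ s, (c α : ℂ) • M α) - (c₀ : ℂ) • M₀) *ᵥ y)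
      = (∑ α ∈ s, (c α : ℂ) * dotProduct (star y) (M α *ᵥ y))
        - (c₀ : ℂ) * dotProduct (star y) (M₀ *ᵥ y) := by
  rw [Matrix.sub_mulVec, dotProduct_sub, Matrix.smul_mulVec,
    dotProduct_smul, smul_eq_mul]
  congr 1
  have hsum : (∑ α ∈ s, (c α : ℂ) • M α) *ᵥ y = ∑ α ∈ s, ((c α : ℂ) • M α) *ᵥ y := by
    ext i
    simp only [Matrix.mulVec, dotProduct, Matrix.sum_apply, Matrix.smul_apply,
      smul_eq_mul, Finset.sum_mul, Finset.sum_apply]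
    rw [Finset.sum_comm]
  rw [hsum]
  have hdot : dotProduct (star y) (∑ α ∈ s, ((c α : ℂ) • M α) *ᵥ y)
      = ∑ α ∈ s, dotProduct (star y) (((c α : ℂ) • M α) *ᵥ y) := by
    simp only [dotProduct, Finset.sum_apply, Finset.mul_sum]
    rw [Finset.sum_comm]
  rw [hdot]
  refine Finset.sum_congr rfl fun α _ => ?_
  rw [Matrix.smul_mulVec, dotProduct_smul, smul_eq_mul]

end Aux

/-- Spectral sandwich condition making
`φ(a) = ∑_{α≥2} λ_α F_α a F_αᴴ − λ₁ F₁ a F₁ᴴ` `k`-positive but not `(k+1)`-positive. -/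
theorem kPositive_not_succ_kPositive_of_spectral_condition (d₁ d₂ k : ℕ)
    (hk1 : 1 ≤ k) (hk2 : k < min d₁ d₂)
    (F : Fin (d₁ * d₂) → Matrix (Fin d₂) (Fin d₁) ℂ)
    (hF : ∀ α β, ((F α)ᴴ * F β).trace = if α = β then 1 else 0)
    (lam : Fin (d₁ * d₂) → ℝ) (hlam : ∀ α, 0 < lam α)
    (α₁ : Fin (d₁ * d₂)) (hα₁ : (α₁ : ℕ) = 0)
    (φ : Matrix (Fin d₁) (Fin d₁) ℂ →ₗ[ℂ] Matrix (Fin d₂) (Fin d₂) ℂ)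
    (hφ : ∀ a, φ a = (∑ α ∈ Finset.univ.erase α₁, (lam α : ℂ) • (F α * a * (F α)ᴴ))
        - (lam α₁ : ℂ) • (F α₁ * a * (F α₁)ᴴ))
    (hg0 : 0 < gk k (F α₁)) (hgk : gk k (F α₁) ≤ gk (k + 1) (F α₁))
    (hg1 : gk (k + 1) (F α₁) < 1)
    (hcond : ∀ α ∈ Finset.univ.erase α₁,
      lam α₁ * gk k (F α₁) / (1 - gk k (F α₁)) ≤ lam α ∧
      lam α < lam α₁ * gk (k + 1) (F α₁) / (1 - gk (k + 1) (F α₁))) :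
    kPositive d₁ d₂ k φ ∧ ¬ kPositive d₁ d₂ (k + 1) φ := by
  classical
  have hmin := lt_min_iff.mp hk2
  have hkd2 : k + 1 ≤ d₂ := by omega
  have hkd1 : k + 1 ≤ d₁ := by omega
  have hDpos : 0 < d₁ * d₂ := Nat.mul_pos (by omega) (by omega)
  -- block map identity
  have hblock : ∀ (K : ℕ) (a : Matrix (Fin K × Fin d₁) (Fin K × Fin d₁) ℂ),
      (Matrix.of fun p q : Fin K × Fin d₂ =>
        φ (Matrix.of fun x y => a (p.1, x) (q.1, y)) p.2 q.2)
      = (∑ α ∈ Finset.univ.erase α₁,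
          (lam α : ℂ) • (Gmat K (F α) * a * (Gmat K (F α))ᴴ))
        - (lam α₁ : ℂ) • (Gmat K (F α₁) * a * (Gmat K (F α₁))ᴴ) := by
    intro K a
    ext p q
    rw [Matrix.of_apply, hφ]
    simp only [Matrix.sub_apply, Matrix.smul_apply, Matrix.sum_apply, smul_eq_mul]
    congr 1
    · refine Finset.sum_congr rfl fun α _ => ?_
      rw [Gmat_conj_apply]
    · rw [Gmat_conj_apply]
  have hglt : gk k (F α₁) < 1 := lt_of_le_of_lt hgk hg1
  constructor
  · -- k-positivity
    intro a ha
    obtain ⟨B, rfl⟩ := posSemidef_iff_eq_transpose_mul_self_aux ha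
    rw [hblock k (Bᴴ * B)]
    rw [Matrix.posSemidef_iff_dotProduct_mulVec]
    constructor
    · -- Hermitian
      have hterm : ∀ α : Fin (d₁ * d₂),
          ((lam α : ℂ) • (Gmat k (F α) * (Bᴴ * B) * (Gmat k (F α))ᴴ)).IsHermitian := by
        intro α
        have h := isHermitian_Gmat_conj (K := k) (F α)
          (Matrix.posSemidef_conjTranspose_mul_self B).1
        unfold Matrix.IsHermitian at h ⊢
        rw [Matrix.conjTranspose_smul, h]
        congr 1
        simp [RCLike.star_def, Complex.conj_ofReal]
      have hsum : (∑ α ∈ Finset.univ.erase α₁,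
          (lam α : ℂ) • (Gmat k (F α) * (Bᴴ * B) * (Gmat k (F α))ᴴ)).IsHermitian := by
        unfold Matrix.IsHermitian
        rw [Matrix.conjTranspose_sum]
        exact Finset.sum_congr rfl fun α _ => hterm α
      exact hsum.sub (hterm α₁)
    · -- positivity of the quadratic form
      intro y
      rw [dot_sum_sub]
      have hformv : ∀ α : Fin (d₁ * d₂),
          dotProduct (star y)
            ((Gmat k (F α) * (Bᴴ * B) * (Gmat k (F α))ᴴ) *ᵥ y)
          = ∑ r, (Complex.normSq (((F α)ᴴ *
              (Matrix.of fun n t => ∑ i, y (i, n) * B r (i, t))).trace) : ℂ) :=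
        fun α => form_eq_sum_normSq (F α) B y
      simp only [hformv]
      set g := gk k (F α₁) with hgdef
      have hreal : (0:ℝ) ≤ (∑ α ∈ Finset.univ.erase α₁, lam α *
            ∑ r : Fin k × Fin d₁, Complex.normSq (((F α)ᴴ *
              (Matrix.of fun n t => ∑ i, y (i, n) * B r (i, t))).trace))
          - lam α₁ * ∑ r : Fin k × Fin d₁, Complex.normSq (((F α₁)ᴴ *
              (Matrix.of fun n t => ∑ i, y (i, n) * B r (i, t))).trace) := by
        set N : (Fin k × Fin d₁) → Matrix (Fin d₂) (Fin d₁) ℂ :=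
          fun r => Matrix.of fun n t => ∑ i, y (i, n) * B r (i, t) with hNdef
        set u : Fin (d₁ * d₂) → (Fin k × Fin d₁) → ℝ :=
          fun α r => Complex.normSq (((F α)ᴴ * N r).trace) with hudef
        have hexch : ∀ lam' : Fin (d₁ * d₂) → ℝ, ∀ s : Finset (Fin (d₁ * d₂)),
            (∑ α ∈ s, lam' α * ∑ r : Fin k × Fin d₁, u α r)
              = ∑ r : Fin k × Fin d₁, ∑ α ∈ s, lam' α * u α r := by
          intro lam' s
          rw [Finset.sum_comm]
          exact Finset.sum_congr rfl fun α _ => Finset.mul_sum _ _ _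
        rw [hexch lam, sub_nonneg]
        have hsingle : ∀ α, lam α₁ * ∑ r : Fin k × Fin d₁, u α r
            = ∑ r : Fin k × Fin d₁, lam α₁ * u α r := fun α => Finset.mul_sum _ _ _
        rw [hsingle]
        refine Finset.sum_le_sum fun r _ => ?_
        -- per-r core inequality
        have hpars : ∑ α, u α r = (((N r)ᴴ * N r).trace).re :=
          parseval_traces F hF rfl hDpos (N r)
        have hNYX : N r = (Matrix.of fun (i : Fin k) (n : Fin d₂) => star (y (i, n)))ᴴ *
            (Matrix.of fun (i : Fin k) (t : Fin d₁) => B r (i, t)) := by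
          ext n t
          simp only [hNdef, Matrix.of_apply, Matrix.mul_apply, Matrix.conjTranspose_apply,
            star_star]
        have hrb := rank_bound (d₁ := d₁) (d₂ := d₂) hk1 (by omega) (F α₁)
          (Matrix.of fun (i : Fin k) (n : Fin d₂) => star (y (i, n)))
          (Matrix.of fun (i : Fin k) (t : Fin d₁) => B r (i, t))
        rw [← hNYX] at hrb
        have ht : u α₁ r ≤ g * (∑ α, u α r) := by
          rw [hpars]
          exact hrb
        exact core_ineq lam α₁ g (lam α₁) hg0 hglt (hlam α₁)
          (fun α hα => (hcond α hα).1) (fun α => u α r)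
          (fun α => Complex.normSq_nonneg _) ht
      exact_mod_cast hreal
  · -- not (k+1)-positive
    intro hkpos
    have hH : (F α₁ * (F α₁)ᴴ).IsHermitian := Matrix.isHermitian_mul_conjTranspose_self (F α₁)
    set μ : Fin d₂ → ℝ := hH.eigenvalues with hμdef
    obtain ⟨T, hTcard, hTsum, -⟩ := sumKLargest_spec (k + 1) (by simpa using hkd2) μ
    set g := gk (k + 1) (F α₁) with hgdef
    have hgsum : ∑ j ∈ T, μ j = g := hTsum
    set U : Matrix (Fin d₂) (Fin d₂) ℂ := ↑(hH.eigenvectorUnitary) with hUdef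
    have hU1 : Uᴴ * U = 1 := by
      rw [← Matrix.star_eq_conjTranspose]
      exact Matrix.mem_unitaryGroup_iff'.mp hH.eigenvectorUnitary.2
    set Dμ : Matrix (Fin d₂) (Fin d₂) ℂ := Matrix.diagonal (RCLike.ofReal ∘ μ) with hDμdef
    have hspecH : F α₁ * (F α₁)ᴴ = U * Dμ * Uᴴ := by
      have h := hH.spectral_theorem
      rw [← Matrix.star_eq_conjTranspose]
      exact h
    set σ := T.orderEmbOfFin hTcard with hσdef
    have himg : Finset.image σ Finset.univ = T := by
      apply Finset.coe_injective
      rw [Finset.coe_image, Finset.coe_univ, Set.image_univ, hσdef,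
        Finset.range_orderEmbOfFin]
    have hsumT : ∀ f : Fin d₂ → ℂ, ∑ j ∈ T, f j = ∑ i : Fin (k + 1), f (σ i) := by
      intro f
      rw [← himg, Finset.sum_image (fun a _ b _ h => σ.injective h)]
    set E' : Matrix (Fin d₂) (Fin d₂) ℂ :=
      Matrix.diagonal (fun j => if j ∈ T then 1 else 0) with hE'def
    set P := U * E' * Uᴴ with hPdef
    have hE'H : E'ᴴ = E' := by
      rw [hE'def, Matrix.diagonal_conjTranspose]
      have : (star fun j => if j ∈ T then (1:ℂ) else 0)
          = (fun j => if j ∈ T then (1:ℂ) else 0) := by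
        funext j; by_cases h : j ∈ T <;> simp [h]
      rw [this]
    have hE'E : E' * E' = E' := by
      rw [hE'def, Matrix.diagonal_mul_diagonal]
      have : (fun j => (if j ∈ T then (1:ℂ) else 0) * (if j ∈ T then (1:ℂ) else 0))
          = (fun j => if j ∈ T then (1:ℂ) else 0) := by
        funext j; by_cases h : j ∈ T <;> simp [h]
      rw [this]
    have hPH : Pᴴ = P := by
      rw [hPdef, Matrix.conjTranspose_mul, Matrix.conjTranspose_mul, hE'H,
        Matrix.conjTranspose_conjTranspose, Matrix.mul_assoc]
    have hPP : P * P = P := by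
      rw [hPdef]
      calc U * E' * Uᴴ * (U * E' * Uᴴ) = U * (E' * ((Uᴴ * U) * E')) * Uᴴ := by
            simp only [Matrix.mul_assoc]
        _ = U * E' * Uᴴ := by rw [hU1, Matrix.one_mul, hE'E, Matrix.mul_assoc]
    set B : Matrix (Fin 1) (Fin (k + 1) × Fin d₁) ℂ :=
      Matrix.of fun _ x => (Uᴴ * F α₁) (σ x.1) x.2 with hBdef
    set y : Fin (k + 1) × Fin d₂ → ℂ := fun p => U p.2 (σ p.1) with hydef
    have hpsd := hkpos (Bᴴ * B) (Matrix.posSemidef_conjTranspose_mul_self B)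
    have h0 := hpsd.dotProduct_mulVec_nonneg y
    rw [hblock (k + 1) (Bᴴ * B), dot_sum_sub] at h0
    have hformv : ∀ α : Fin (d₁ * d₂),
        dotProduct (star y)
          ((Gmat (k + 1) (F α) * (Bᴴ * B) * (Gmat (k + 1) (F α))ᴴ) *ᵥ y)
        = ∑ r : Fin 1, (Complex.normSq (((F α)ᴴ *
            (Matrix.of fun n t => ∑ i, y (i, n) * B r (i, t))).trace) : ℂ) :=
      fun α => form_eq_sum_normSq (F α) B y
    simp only [hformv, Fin.sum_univ_one] at h0
    have hN : (Matrix.of fun n t => ∑ i : Fin (k + 1), y (i, n) * B 0 (i, t))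
        = P * F α₁ := by
      ext n t
      have hrhs : (P * F α₁) n t = ∑ j ∈ T, U n j * (Uᴴ * F α₁) j t := by
        rw [hPdef, Matrix.mul_assoc, Matrix.mul_assoc]
        rw [Matrix.mul_apply]
        have hEent : ∀ j, (E' * (Uᴴ * F α₁)) j t
            = (if j ∈ T then (1:ℂ) else 0) * (Uᴴ * F α₁) j t := by
          intro j
          rw [hE'def, Matrix.diagonal_mul]
        calc ∑ j, U n j * (E' * (Uᴴ * F α₁)) j t
            = ∑ j, if j ∈ T then U n j * (Uᴴ * F α₁) j t else 0 := by
              refine Finset.sum_congr rfl fun j _ => ?_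
              rw [hEent j]
              by_cases h : j ∈ T <;> simp [h]
          _ = ∑ j ∈ T, U n j * (Uᴴ * F α₁) j t := by
              rw [Finset.sum_ite_mem, Finset.univ_inter]
      rw [hrhs, hsumT]
      simp only [Matrix.of_apply, hydef, hBdef]
    rw [hN] at h0
    -- trace computations
    have hEDdiag : E' * Dμ = Matrix.diagonal fun j => if j ∈ T then ((μ j : ℝ) : ℂ) else 0 := by
      rw [hE'def, hDμdef, Matrix.diagonal_mul_diagonal]
      congr 1
      funext j
      by_cases h : j ∈ T <;> simp [h]
    have htrE'D : (E' * Dμ).trace = ((g : ℝ) : ℂ) := by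
      rw [hEDdiag, Matrix.trace_diagonal]
      rw [← hgsum]
      rw [Finset.sum_ite_mem, Finset.univ_inter]
      push_cast
      rfl
    have htrP : ((F α₁)ᴴ * (P * F α₁)).trace = ((g : ℝ) : ℂ) := by
      rw [Matrix.trace_mul_comm]
      have e1 : P * F α₁ * (F α₁)ᴴ = U * (E' * Dμ) * Uᴴ := by
        rw [Matrix.mul_assoc, hspecH, hPdef]
        calc U * E' * Uᴴ * (U * Dμ * Uᴴ) = U * (E' * ((Uᴴ * U) * Dμ)) * Uᴴ := by
              simp only [Matrix.mul_assoc]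
          _ = U * (E' * Dμ) * Uᴴ := by rw [hU1, Matrix.one_mul]
      rw [e1, Matrix.trace_mul_comm (U * (E' * Dμ)) Uᴴ, ← Matrix.mul_assoc, hU1,
        Matrix.one_mul, htrE'D]
    have htrNN : (((P * F α₁))ᴴ * (P * F α₁)).trace = ((g : ℝ) : ℂ) := by
      have e2 : ((P * F α₁))ᴴ * (P * F α₁) = (F α₁)ᴴ * (P * F α₁) := by
        rw [Matrix.conjTranspose_mul, hPH, Matrix.mul_assoc,
          ← Matrix.mul_assoc P P (F α₁), hPP]
      rw [e2, htrP]
    -- Parseval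
    have hpars : ∑ α, Complex.normSq (((F α)ᴴ * (P * F α₁)).trace) = g := by
      rw [parseval_traces F hF rfl hDpos (P * F α₁), htrNN, Complex.ofReal_re]
    have hn1 : Complex.normSq (((F α₁)ᴴ * (P * F α₁)).trace) = g * g := by
      rw [htrP, Complex.normSq_ofReal]
    set n : Fin (d₁ * d₂) → ℝ := fun α => Complex.normSq (((F α)ᴴ * (P * F α₁)).trace)
      with hndef
    have herasesum : ∑ α ∈ Finset.univ.erase α₁, n α = g - g * g := by
      have h4 := Finset.add_sum_erase Finset.univ n (Finset.mem_univ α₁)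
      have h2 : n α₁ = g * g := hn1
      have h3 : ∑ α, n α = g := hpars
      linarith
    have h0' : (0:ℝ) ≤ (∑ α ∈ Finset.univ.erase α₁, lam α * n α) - lam α₁ * n α₁ := by
      exact_mod_cast h0
    have hgpos : 0 < g := lt_of_lt_of_le hg0 hgk
    have hposTail : 0 < g - g * g := by nlinarith
    have hex : ∃ α ∈ Finset.univ.erase α₁, 0 < n α := by
      by_contra hcon
      push_neg at hcon
      have h5 : ∑ α ∈ Finset.univ.erase α₁, n α = 0 := by
        refine Finset.sum_eq_zero fun α hα => ?_
        exact le_antisymm (hcon α hα) (Complex.normSq_nonneg _)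
      rw [herasesum] at h5
      linarith
    obtain ⟨α₂, hα₂mem, hα₂pos⟩ := hex
    set B' := lam α₁ * g / (1 - g) with hB'def
    have hstrict : ∑ α ∈ Finset.univ.erase α₁, lam α * n α
        < ∑ α ∈ Finset.univ.erase α₁, B' * n α := by
      refine Finset.sum_lt_sum (fun α hα => ?_) ⟨α₂, hα₂mem, ?_⟩
      · exact mul_le_mul_of_nonneg_right ((hcond α hα).2).le (Complex.normSq_nonneg _)
      · exact mul_lt_mul_of_pos_right ((hcond α₂ hα₂mem).2) hα₂pos
    have hBsum : ∑ α ∈ Finset.univ.erase α₁, B' * n α = lam α₁ * (g * g) := by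
      rw [← Finset.mul_sum, herasesum, hB'def]
      have h1g : (1 : ℝ) - g ≠ 0 := by linarith
      field_simp
    rw [hBsum] at hstrict
    have hn1' : lam α₁ * n α₁ = lam α₁ * (g * g) := by
      have : n α₁ = g * g := hn1
      rw [this]
    linarith
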